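/- For the Volterra lattice equation u_t(n) = u(n)(u(n-1) - u(n+1)) with 2×2 spectral matrix U(n,λ) = [[1, u(n)],[λ^{-1}, 0]] and Lax matrix V₀(n,λ) = [[λ/2 - u(n), λu(n)],[1, -λ/2 - u(n-1)]], the discrete zero curvature equation holds: E(V₀)·U - U·V₀ = U'[K₀], where K₀(n) = u(n)(u(n-1) - u(n+1)), (E V₀)(n) = V₀(n+1), and U'[K₀] is the matrix [[0, K₀(n)],[0,0]]. -/
import Mathlib

/-- Discrete zero curvature representation of the Volterra lattice:
for U(n) = [[1, u(n)],[λ⁻¹, 0]], V₀(n) = [[λ/2 - u(n), λu(n)],[1, -λ/2 - u(n-1)]]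
and K₀(n) = u(n)(u(n-1) - u(n+1)), one has
E(V₀)·U - U·V₀ = U'[K₀], i.e. V₀(n+1)U(n) - U(n)V₀(n) = [[0, K₀(n)],[0,0]]. -/
theorem volterra_zero_curvature
    (u : ℤ → ℝ) (lam : ℝ) (hlam : lam ≠ 0) (n : ℤ) :
    letI U : ℤ → Matrix (Fin 2) (Fin 2) ℝ := fun m => !![1, u m; lam⁻¹, 0]
    letI V₀ : ℤ → Matrix (Fin 2) (Fin 2) ℝ := fun m =>
      !![lam / 2 - u m, lam * u m; 1, -(lam / 2) - u (m - 1)]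
    letI K₀ : ℤ → ℝ := fun m => u m * (u (m - 1) - u (m + 1))
    V₀ (n + 1) * U n - U n * V₀ n = !![0, K₀ n; 0, 0] := by
  have h : n + 1 - 1 = n := by ring
  ext i j
  fin_cases i <;> fin_cases j <;>
    simp [Matrix.mul_apply, Fin.sum_univ_two, h] <;> field_simp <;> ring
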